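/- A regular Hausdorff space has a countable network if and only if it is the continuous image of a separable metrizable space. -/
import Mathlib


/-- `N` is a network for `X`. -/
def IsNetwork {X : Type u} [TopologicalSpace X] (N : Set (Set X)) : Prop :=
  ∀ x : X, ∀ U : Set X, IsOpen U → x ∈ U → ∃ n ∈ N, x ∈ n ∧ n ⊆ U

/-- A regular Hausdorff space has a countable network iff it is a continuous image
of a separable metrizable space. -/
theorem cosmic_iff_continuous_image {X : Type u} [TopologicalSpace X] [T3Space X] :
    (∃ N : Set (Set X), N.Countable ∧ IsNetwork N) ↔
      ∃ (Y : Type u) (_ : TopologicalSpace Y),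
        TopologicalSpace.MetrizableSpace Y ∧ TopologicalSpace.SeparableSpace Y ∧
        ∃ f : Y → X, Continuous f ∧ Function.Surjective f := by
  constructor
  · rintro ⟨N, hNc, hN⟩
    -- enumerate `insert ∅ N`
    obtain ⟨e, he⟩ : ∃ e : ℕ → Set X, insert ∅ N = Set.range e :=
      (hNc.insert ∅).exists_eq_range ⟨∅, Set.mem_insert _ _⟩
    -- the "address space"
    set P : (ℕ → ℕ) → X → Prop := fun s x =>
      (∀ n, x ∈ e (s n)) ∧ ∀ U : Set X, IsOpen U → x ∈ U → ∃ n, e (s n) ⊆ U with hP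
    set Z : Set (ℕ → ℕ) := {s | ∃ x, P s x} with hZ
    refine ⟨ULift.{u} Z, inferInstance,
      (Homeomorph.ulift (X := Z)).isEmbedding.metrizableSpace, ?_, ?_⟩
    · have : SecondCountableTopology (ULift.{u} Z) :=
        (Homeomorph.ulift (X := Z)).isEmbedding.secondCountableTopology
      infer_instance
    · classical
      refine ⟨fun z => z.down.2.choose, ?_, ?_⟩
      · -- continuity
        rw [continuous_iff_continuousAt]
        intro z U hU
        rw [mem_nhds_iff] at hU
        obtain ⟨V, hVU, hVo, hVx⟩ := hU
        have hPz := z.down.2.choose_spec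
        obtain ⟨n, hn⟩ := hPz.2 V hVo hVx
        rw [Filter.mem_map]
        have hopen : IsOpen {w : ULift.{u} Z | w.down.1 n = z.down.1 n} := by
          have : Continuous fun w : ULift.{u} Z => w.down.1 n :=
            (continuous_apply n).comp (continuous_subtype_val.comp
              (Homeomorph.ulift (X := Z)).continuous)
          exact this.isOpen_preimage {z.down.1 n} (isOpen_discrete _)
        refine Filter.mem_of_superset (hopen.mem_nhds rfl) ?_
        intro w hw
        have hPw := w.down.2.choose_spec
        have : w.down.2.choose ∈ e (w.down.1 n) := hPw.1 n
        rw [hw] at this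
        exact hVU (hn this)
      · -- surjectivity
        intro x
        have hxmem : ∀ U : Set X, IsOpen U → x ∈ U → ∃ m : ℕ, x ∈ e m ∧ e m ⊆ U := by
          intro U hUo hxU
          obtain ⟨n, hnN, hxn, hnU⟩ := hN x U hUo hxU
          have : n ∈ Set.range e := he ▸ Set.mem_insert_of_mem _ hnN
          obtain ⟨m, rfl⟩ := this
          exact ⟨m, hxn, hnU⟩
        set T : Set ℕ := {m | x ∈ e m} with hT
        have hTne : T.Nonempty := by
          obtain ⟨m, hm, -⟩ := hxmem Set.univ isOpen_univ (Set.mem_univ x)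
          exact ⟨m, hm⟩
        obtain ⟨s, hs⟩ := (Set.to_countable T).exists_eq_range hTne
        have hsx : P s x := by
          constructor
          · intro n
            have : s n ∈ T := hs ▸ Set.mem_range_self n
            exact this
          · intro U hUo hxU
            obtain ⟨m, hm, hmU⟩ := hxmem U hUo hxU
            have : m ∈ Set.range s := hs ▸ hm
            obtain ⟨n, rfl⟩ := this
            exact ⟨n, hmU⟩
        refine ⟨ULift.up ⟨s, x, hsx⟩, ?_⟩
        -- the chosen point equals x by Hausdorffness
        show (ULift.up.{u} (⟨s, ⟨x, hsx⟩⟩ : Z)).down.2.choose = x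
        have hPy : P s (ULift.up.{u} (⟨s, ⟨x, hsx⟩⟩ : Z)).down.2.choose :=
          (⟨s, ⟨x, hsx⟩⟩ : Z).2.choose_spec
        by_contra hne
        obtain ⟨U, V, hUo, hVo, hyU, hxV, hUV⟩ := t2_separation hne
        obtain ⟨n, hn⟩ := hPy.2 U hUo hyU
        exact Set.disjoint_left.mp hUV (hn (hsx.1 n)) hxV
  · rintro ⟨Y, _, hM, hS, f, hf, hsurj⟩
    have : SecondCountableTopology Y := by
      letI := TopologicalSpace.metrizableSpaceMetric Y
      exact UniformSpace.secondCountable_of_separable Y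
    obtain ⟨B, hBc, -, hB⟩ := TopologicalSpace.exists_countable_basis Y
    refine ⟨(fun b => f '' b) '' B, hBc.image _, ?_⟩
    intro x U hUo hxU
    obtain ⟨y, rfl⟩ := hsurj x
    obtain ⟨b, hbB, hyb, hbU⟩ := hB.exists_subset_of_mem_open
      (Set.mem_preimage.mpr hxU) (hUo.preimage hf)
    exact ⟨f '' b, Set.mem_image_of_mem _ hbB, Set.mem_image_of_mem _ hyb,
      Set.image_subset_iff.mpr hbU⟩
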